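/- Let H be a complex Hilbert space, let B̂₀ and B̂₁ be selfadjoint contractions on H with B̂₀ ≤ B̂₁ (Loewner order), and let N be a closed subspace of H containing the range of B̂₁ − B̂₀. For ξ ∈ ℂ \ [−1, 1] define the bounded operators on N: Q̂₀(ξ) = P_N [ (B̂₁ − B̂₀)^{1/2} (B̂₀ − ξI)^{-1} (B̂₁ − B̂₀)^{1/2} + I ]↾N and Q̂₁(ξ) = P_N [ (B̂₁ − B̂₀)^{1/2} (B̂₁ − ξI)^{-1} (B̂₁ − B̂₀)^{1/2} − I ]↾N. Then Q̂₀(ξ) Q̂₁(ξ) = Q̂₁(ξ) Q̂₀(ξ) = −I_N for every ξ ∈ ℂ \ [−1, 1]. -/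

import Mathlib

open ContinuousLinearMap

set_option synthInstance.maxHeartbeats 1000000
set_option maxHeartbeats 1000000

/-- For selfadjoint contractions `B̂₀ ≤ B̂₁` on `H` and a closed subspace `N` containing
`ran (B̂₁ − B̂₀)`, the Kreĭn–Ovcharenko type functions
`Q̂₀(ξ) = P_N [(B̂₁ − B̂₀)^{1/2} (B̂₀ − ξ)⁻¹ (B̂₁ − B̂₀)^{1/2} + I]↾N` and
`Q̂₁(ξ) = P_N [(B̂₁ − B̂₀)^{1/2} (B̂₁ − ξ)⁻¹ (B̂₁ − B̂₀)^{1/2} − I]↾N`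
satisfy `Q̂₀(ξ) Q̂₁(ξ) = Q̂₁(ξ) Q̂₀(ξ) = −I_N` for every `ξ ∈ ℂ \ [−1, 1]`. -/
theorem stmt_5 {H : Type*} [NormedAddCommGroup H] [InnerProductSpace ℂ H] [CompleteSpace H]
    (B0 B1 : H →L[ℂ] H) (hB0sa : IsSelfAdjoint B0) (hB1sa : IsSelfAdjoint B1)
    (hB0c : ‖B0‖ ≤ 1) (hB1c : ‖B1‖ ≤ 1) (hle : B0 ≤ B1)
    (N : Submodule ℂ H) (hN : IsClosed (N : Set H)) [CompleteSpace N]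
    (hran : ∀ x : H, (B1 - B0) x ∈ N)
    (ξ : ℂ) (hξ : ¬(ξ.im = 0 ∧ -1 ≤ ξ.re ∧ ξ.re ≤ 1)) :
    let R := CFC.sqrt (B1 - B0)
    let Q0 : N →L[ℂ] N := N.orthogonalProjection ∘L
      (R ∘L Ring.inverse (B0 - ξ • 1) ∘L R + 1) ∘L N.subtypeL
    let Q1 : N →L[ℂ] N := N.orthogonalProjection ∘L
      (R ∘L Ring.inverse (B1 - ξ • 1) ∘L R - 1) ∘L N.subtypeL
    Q0 ∘L Q1 = -1 ∧ Q1 ∘L Q0 = -1 := by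
  intro R Q0 Q1
  rcases subsingleton_or_nontrivial H with hH | hH
  · exact ⟨ContinuousLinearMap.ext fun n => Subtype.ext (Subsingleton.elim _ _),
      ContinuousLinearMap.ext fun n => Subtype.ext (Subsingleton.elim _ _)⟩
  have hD : (0 : H →L[ℂ] H) ≤ B1 - B0 := sub_nonneg.mpr hle
  have hRsq : R * R = B1 - B0 := by
    have h := CFC.sq_sqrt (B1 - B0) hD
    rwa [pow_two] at h
  have hRsa : IsSelfAdjoint R := IsSelfAdjoint.of_nonneg (CFC.sqrt_nonneg _)
  have hRadj : ContinuousLinearMap.adjoint R = R := by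
    rw [← ContinuousLinearMap.star_eq_adjoint]; exact hRsa
  -- invertibility
  have hunit : ∀ B : H →L[ℂ] H, IsSelfAdjoint B → ‖B‖ ≤ 1 → IsUnit (B - ξ • 1) := by
    intro B hsa hc
    have hnot : ξ ∉ spectrum ℂ B := by
      intro hmem
      have h1 : ξ = (ξ.re : ℂ) := hsa.mem_spectrum_eq_re hmem
      have h2 : ‖ξ‖ ≤ 1 := (spectrum.norm_le_norm_of_mem hmem).trans hc
      have him : ξ.im = 0 := by
        have := congrArg Complex.im h1
        simpa using this
      have hre : |ξ.re| ≤ 1 := by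
        refine (Complex.abs_re_le_norm ξ).trans ?_
        exact h2
      exact hξ ⟨him, (abs_le.mp hre).1, (abs_le.mp hre).2⟩
    have h := spectrum.notMem_iff.mp hnot
    rw [Algebra.algebraMap_eq_smul_one] at h
    have h' := h.neg
    rwa [neg_sub] at h'
  have hU0 := hunit B0 hB0sa hB0c
  have hU1 := hunit B1 hB1sa hB1c
  set u0 := Ring.inverse (B0 - ξ • 1) with hu0
  set u1 := Ring.inverse (B1 - ξ • 1) with hu1
  have h0l : u0 * (B0 - ξ • 1) = 1 := Ring.inverse_mul_cancel _ hU0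
  have h0r : (B0 - ξ • 1) * u0 = 1 := Ring.mul_inverse_cancel _ hU0
  have h1l : u1 * (B1 - ξ • 1) = 1 := Ring.inverse_mul_cancel _ hU1
  have h1r : (B1 - ξ • 1) * u1 = 1 := Ring.mul_inverse_cancel _ hU1
  have e : B1 - B0 = (B1 - ξ • 1) - (B0 - ξ • 1) :=
    (sub_sub_sub_cancel_right B1 B0 (ξ • 1)).symm
  have hres0 : u0 * (B1 - B0) * u1 = u0 - u1 := by
    rw [e, mul_sub, sub_mul, mul_assoc, h1r, mul_one, h0l, one_mul]
  have hres1 : u1 * (B1 - B0) * u0 = u0 - u1 := by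
    rw [e, mul_sub, sub_mul, h1l, one_mul, mul_assoc, h0r, mul_one]
  -- the two full-space products
  have hAB : (R ∘L u0 ∘L R + 1) ∘L (R ∘L u1 ∘L R - 1) = -1 := by
    show (R * (u0 * R) + 1) * (R * (u1 * R) - 1) = -1
    have hx : (R * (u0 * R)) * (R * (u1 * R)) = R * (u0 * R) - R * (u1 * R) := by
      have h' : (R * (u0 * R)) * (R * (u1 * R)) = R * (u0 * (R * R) * u1) * R := by
        noncomm_ring
      rw [h', hRsq, hres0]
      noncomm_ring
    calc (R * (u0 * R) + 1) * (R * (u1 * R) - 1)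
        = (R * (u0 * R)) * (R * (u1 * R)) - R * (u0 * R) + R * (u1 * R) - 1 := by
          noncomm_ring
      _ = -1 := by rw [hx]; abel
  have hBA : (R ∘L u1 ∘L R - 1) ∘L (R ∘L u0 ∘L R + 1) = -1 := by
    show (R * (u1 * R) - 1) * (R * (u0 * R) + 1) = -1
    have hx : (R * (u1 * R)) * (R * (u0 * R)) = R * (u0 * R) - R * (u1 * R) := by
      have h' : (R * (u1 * R)) * (R * (u0 * R)) = R * (u1 * (R * R) * u0) * R := by
        noncomm_ring
      rw [h', hRsq, hres1]
      noncomm_ring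
    calc (R * (u1 * R) - 1) * (R * (u0 * R) + 1)
        = (R * (u1 * R)) * (R * (u0 * R)) + R * (u1 * R) - R * (u0 * R) - 1 := by
          noncomm_ring
      _ = -1 := by rw [hx]; abel
  -- range of R is contained in N
  have hker : ∀ y : H, y ∈ Nᗮ → R y = 0 := by
    intro y hy
    have h2 : R (R y) = (B1 - B0) y := by
      rw [← ContinuousLinearMap.mul_apply, hRsq]
    have h0 : (inner ℂ (R y) (R y) : ℂ) = 0 := by
      have h1 : (inner ℂ ((ContinuousLinearMap.adjoint R) y) (R y) : ℂ) = inner ℂ y (R (R y)) :=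
        ContinuousLinearMap.adjoint_inner_left R (R y) y
      rw [hRadj] at h1
      rw [h1, h2]
      exact (Submodule.mem_orthogonal' N y).mp hy _ (hran y)
    exact inner_self_eq_zero.mp h0
  have hRN : ∀ x : H, R x ∈ N := by
    intro x
    rw [← Submodule.orthogonal_orthogonal N]
    refine (Submodule.mem_orthogonal _ _).mpr fun y hy => ?_
    rw [← ContinuousLinearMap.adjoint_inner_left R, hRadj, hker y hy, inner_zero_left]
  -- put everything together
  constructor
  · refine ContinuousLinearMap.ext fun n => ?_
    have hb : (R ∘L u1 ∘L R - 1) (↑n : H) ∈ N := by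
      have hval : (R ∘L u1 ∘L R - 1) (↑n : H) = R (u1 (R ↑n)) - ↑n := by simp
      rw [hval]
      exact sub_mem (hRN _) n.2
    have e1 : ((Q1 n : N) : H) = (R ∘L u1 ∘L R - 1) (↑n : H) := by
      show ((N.orthogonalProjection ((R ∘L u1 ∘L R - 1) (↑n : H))) : H) = _
      exact (Submodule.starProjection_eq_self_iff (K := N)).mpr hb
    have ha : (R ∘L u0 ∘L R + 1) ((R ∘L u1 ∘L R - 1) (↑n : H)) ∈ N := by
      have hval : (R ∘L u0 ∘L R + 1) ((R ∘L u1 ∘L R - 1) (↑n : H))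
          = R (u0 (R ((R ∘L u1 ∘L R - 1) (↑n : H)))) + (R ∘L u1 ∘L R - 1) (↑n : H) := by
        simp
      rw [hval]
      exact add_mem (hRN _) hb
    have e2 : ((Q0 (Q1 n) : N) : H) = (R ∘L u0 ∘L R + 1) ((R ∘L u1 ∘L R - 1) (↑n : H)) := by
      show ((N.orthogonalProjection ((R ∘L u0 ∘L R + 1) ((Q1 n : N) : H))) : H) = _
      rw [e1]
      exact (Submodule.starProjection_eq_self_iff (K := N)).mpr ha
    have e3 : (R ∘L u0 ∘L R + 1) ((R ∘L u1 ∘L R - 1) (↑n : H)) = -(↑n : H) := by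
      have h := congrArg (fun f : H →L[ℂ] H => f (↑n : H)) hAB
      simp only [ContinuousLinearMap.comp_apply, ContinuousLinearMap.add_apply,
        ContinuousLinearMap.sub_apply, ContinuousLinearMap.one_apply,
        ContinuousLinearMap.neg_apply] at h
      simp only [ContinuousLinearMap.comp_apply, ContinuousLinearMap.add_apply,
        ContinuousLinearMap.sub_apply, ContinuousLinearMap.one_apply]
      rw [← h]
    apply Subtype.ext
    have hcomp : (Q0 ∘L Q1) n = Q0 (Q1 n) := rfl
    rw [hcomp]
    rw [e2, e3]
    simp
  · refine ContinuousLinearMap.ext fun n => ?_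
    have hb : (R ∘L u0 ∘L R + 1) (↑n : H) ∈ N := by
      have hval : (R ∘L u0 ∘L R + 1) (↑n : H) = R (u0 (R ↑n)) + ↑n := by simp
      rw [hval]
      exact add_mem (hRN _) n.2
    have e1 : ((Q0 n : N) : H) = (R ∘L u0 ∘L R + 1) (↑n : H) := by
      show ((N.orthogonalProjection ((R ∘L u0 ∘L R + 1) (↑n : H))) : H) = _
      exact (Submodule.starProjection_eq_self_iff (K := N)).mpr hb
    have ha : (R ∘L u1 ∘L R - 1) ((R ∘L u0 ∘L R + 1) (↑n : H)) ∈ N := by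
      have hval : (R ∘L u1 ∘L R - 1) ((R ∘L u0 ∘L R + 1) (↑n : H))
          = R (u1 (R ((R ∘L u0 ∘L R + 1) (↑n : H)))) - (R ∘L u0 ∘L R + 1) (↑n : H) := by
        simp
      rw [hval]
      exact sub_mem (hRN _) hb
    have e2 : ((Q1 (Q0 n) : N) : H) = (R ∘L u1 ∘L R - 1) ((R ∘L u0 ∘L R + 1) (↑n : H)) := by
      show ((N.orthogonalProjection ((R ∘L u1 ∘L R - 1) ((Q0 n : N) : H))) : H) = _
      rw [e1]
      exact (Submodule.starProjection_eq_self_iff (K := N)).mpr ha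
    have e3 : (R ∘L u1 ∘L R - 1) ((R ∘L u0 ∘L R + 1) (↑n : H)) = -(↑n : H) := by
      have h := congrArg (fun f : H →L[ℂ] H => f (↑n : H)) hBA
      simp only [ContinuousLinearMap.comp_apply, ContinuousLinearMap.add_apply,
        ContinuousLinearMap.sub_apply, ContinuousLinearMap.one_apply,
        ContinuousLinearMap.neg_apply] at h
      simp only [ContinuousLinearMap.comp_apply, ContinuousLinearMap.add_apply,
        ContinuousLinearMap.sub_apply, ContinuousLinearMap.one_apply]
      rw [← h]
    apply Subtype.ext
    have hcomp : (Q1 ∘L Q0) n = Q1 (Q0 n) := rfl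
    rw [hcomp]
    rw [e2, e3]
    simp
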